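/- arXiv:1904.06105 — 6 statements merged into one kernel-verified Lean document; each statement's English description precedes it below -/
import Mathlib

section
/- Let H be a real Hilbert space, F : H → ℝ a function, C₀ ≥ 0, ε ≥ 0, T > 0, and S ⊂ (0,T) a finite set. Let u, w : [0,T] → H be continuous curves that are differentiable at every t ∈ (0,T) \ S and satisfy, for every such t and every v ∈ H, the evolutionary variational inequalities ⟨u'(t), u(t) − v⟩ ≤ F(v) − F(u(t)) + (C₀/2)·‖u(t) − v‖² and ⟨w'(t), w(t) − v⟩ ≤ F(v) − F(w(t)) + (C₀/2)·‖w(t) − v‖² + ε. Then for every t ∈ [0,T] one has ‖w(t) − u(t)‖² ≤ e^{2C₀t}·‖w(0) − u(0)‖² + 2t·e^{2C₀t}·ε. -/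
open Set Filter Topology
/-- Gronwall-type helper: a continuous function on `[0,T]` whose derivative off a finite
set is bounded by `ε'` grows at most linearly. -/
lemma gronwall_linear_aux {φ φ' : ℝ → ℝ} {T ε' : ℝ} {S : Set ℝ} (hS : S.Finite)
    (hc : ContinuousOn φ (Set.Icc 0 T))
    (hd : ∀ x ∈ Set.Ioo 0 T \ S, HasDerivAt φ (φ' x) x)
    (hb : ∀ x ∈ Set.Ioo 0 T \ S, φ' x ≤ ε') :
    ∀ x ∈ Set.Icc 0 T, φ x ≤ φ 0 + ε' * x := by
  have key : ∀ ⦃x⦄, x ∈ Icc 0 T → φ x ≤ φ 0 + ε' * x := by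
    apply image_le_of_liminf_slope_right_le_deriv_boundary hc (by simp)
      (B := fun x => φ 0 + ε' * x) (B' := fun _ => ε')
    · exact (continuous_const.add (continuous_const.mul continuous_id)).continuousOn
    · intro x _
      simpa using ((hasDerivWithinAt_id x (Ici x)).const_mul ε').const_add (φ 0)
    · intro x hx r hr
      -- eventually points to the right are good
      have hgood : ∀ᶠ z in 𝓝[>] x, z ∈ Set.Ioo 0 T \ S := by
        have h1 : Set.Ioo x T ∈ 𝓝[>] x := Ioo_mem_nhdsGT_of_mem ⟨le_refl x, hx.2⟩
        have hcl : IsClosed (S \ {x}) := (hS.subset diff_subset).isClosed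
        have h2 : ∀ᶠ z in 𝓝[>] x, z ∈ (S \ {x})ᶜ :=
          eventually_nhdsWithin_of_eventually_nhds
            (hcl.isOpen_compl.eventually_mem (by simp))
        filter_upwards [h1, h2, self_mem_nhdsWithin] with z hz1 hz2 hz3
        refine ⟨⟨lt_of_le_of_lt hx.1 hz1.1, hz1.2⟩, fun hzS => hz2 ⟨hzS, ?_⟩⟩
        exact ne_of_gt hz3
      obtain ⟨c, hc', hsub⟩ := mem_nhdsGT_iff_exists_Ioc_subset.1 hgood
      have hslope : ∀ z ∈ Set.Ioc x c, φ z - φ x ≤ ε' * (z - x) := by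
        intro z hz
        have hzT : z ∈ Set.Ioo 0 T \ S := hsub hz
        have step : ∀ y ∈ Set.Ioc x z, φ z ≤ φ y + ε' * (z - y) := by
          intro y hy
          have hsub2 : Set.Icc y z ⊆ Set.Ioo 0 T \ S := fun p hp =>
            hsub ⟨lt_of_lt_of_le hy.1 hp.1, le_trans hp.2 hz.2⟩
          have hcc : ContinuousOn φ (Set.Icc y z) := by
            apply hc.mono
            intro p hp
            rcases hsub2 hp with ⟨hp1, _⟩
            exact ⟨hp1.1.le, hp1.2.le⟩
          have := image_le_of_deriv_right_le_deriv_boundary (f := φ) (f' := φ')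
            (a := y) (b := z) hcc
            (fun p hp => (hd p (hsub2 ⟨hp.1, hp.2.le⟩)).hasDerivWithinAt)
            (B := fun t => φ y + ε' * (t - y)) (B' := fun _ => ε')
            (by simp)
            ((continuous_const.add (continuous_const.mul
              (continuous_id.sub continuous_const))).continuousOn)
            (fun p _ => by
              simpa using
                (((hasDerivWithinAt_id p (Ici p)).sub_const y).const_mul ε').const_add (φ y))
            (fun p hp => hb p (hsub2 ⟨hp.1, hp.2.le⟩))
          exact this (right_mem_Icc.2 hy.2)
        -- let y → x⁺
        have hIsub : Set.Ioc x c ⊆ Set.Icc 0 T := fun p hp => by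
          rcases hsub hp with ⟨hp1, _⟩; exact ⟨hp1.1.le, hp1.2.le⟩
        have htφ : Tendsto φ (𝓝[>] x) (𝓝 (φ x)) := by
          have h0 : ContinuousWithinAt φ (Set.Icc 0 T) x :=
            hc.continuousWithinAt ⟨hx.1, hx.2.le⟩
          have : 𝓝[Set.Ioc x c] x ≤ 𝓝[Set.Icc 0 T] x := nhdsWithin_mono x hIsub
          rw [nhdsWithin_Ioc_eq_nhdsGT hc'] at this
          exact h0.mono_left this
        have ht2 : Tendsto (fun y => φ z - ε' * (z - y)) (𝓝[>] x)
            (𝓝 (φ z - ε' * (z - x))) := by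
          apply Tendsto.mono_left _ nhdsWithin_le_nhds
          exact (continuous_const.sub (continuous_const.mul
            (continuous_const.sub continuous_id))).tendsto x
        have hev2 : ∀ᶠ y in 𝓝[>] x, φ z - ε' * (z - y) ≤ φ y := by
          filter_upwards [Ioc_mem_nhdsGT_of_mem ⟨le_refl x, hz.1⟩] with y hy
          have := step y hy; linarith
        have := le_of_tendsto_of_tendsto ht2 htφ hev2
        linarith
      apply Filter.Eventually.frequently
      filter_upwards [Ioc_mem_nhdsGT_of_mem ⟨le_refl x, hc'⟩] with z hz
      have hzx : 0 < z - x := sub_pos.2 hz.1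
      rw [slope_def_field]
      rw [div_lt_iff₀ hzx]
      calc φ z - φ x ≤ ε' * (z - x) := hslope z hz
        _ < r * (z - x) := by nlinarith
  exact fun x hx => key hx

/-- Gronwall-type error estimate between two curves satisfying evolutionary
variational inequalities (one exact, one with defect `ε`). -/
theorem evi_error_estimate
    {H : Type*} [NormedAddCommGroup H] [InnerProductSpace ℝ H] [CompleteSpace H]
    (F : H → ℝ) (C₀ ε T : ℝ) (hC₀ : 0 ≤ C₀) (hε : 0 ≤ ε) (hT : 0 < T)
    (S : Set ℝ) (hS : S.Finite) (hST : S ⊆ Set.Ioo 0 T)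
    (u w : ℝ → H) (u' w' : ℝ → H)
    (hu_cont : ContinuousOn u (Set.Icc 0 T))
    (hw_cont : ContinuousOn w (Set.Icc 0 T))
    (hu_deriv : ∀ t ∈ Set.Ioo 0 T \ S, HasDerivAt u (u' t) t)
    (hw_deriv : ∀ t ∈ Set.Ioo 0 T \ S, HasDerivAt w (w' t) t)
    (hu_evi : ∀ t ∈ Set.Ioo 0 T \ S, ∀ v : H,
      (inner ℝ (u' t) (u t - v) : ℝ) ≤ F v - F (u t) + (C₀ / 2) * ‖u t - v‖ ^ 2)
    (hw_evi : ∀ t ∈ Set.Ioo 0 T \ S, ∀ v : H,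
      (inner ℝ (w' t) (w t - v) : ℝ) ≤ F v - F (w t) + (C₀ / 2) * ‖w t - v‖ ^ 2 + ε) :
    ∀ t ∈ Set.Icc 0 T,
      ‖w t - u t‖ ^ 2 ≤ Real.exp (2 * C₀ * t) * ‖w 0 - u 0‖ ^ 2
        + 2 * t * Real.exp (2 * C₀ * t) * ε := by
  set g : ℝ → ℝ := fun t => ‖w t - u t‖ ^ 2 with hg_def
  set φ : ℝ → ℝ := fun t => Real.exp (-(2 * C₀) * t) * g t with hφ_def
  -- derivative of g
  have hg_eq : g = fun t => (inner ℝ (w t - u t) (w t - u t) : ℝ) := by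
    funext t; rw [real_inner_self_eq_norm_sq]
  have hgd : ∀ t ∈ Set.Ioo 0 T \ S,
      HasDerivAt g (2 * (inner ℝ (w' t - u' t) (w t - u t) : ℝ)) t := by
    intro t ht
    have hx : HasDerivAt (fun s => w s - u s) (w' t - u' t) t :=
      (hw_deriv t ht).sub (hu_deriv t ht)
    have := hx.inner ℝ hx
    rw [hg_eq]
    refine this.congr_deriv ?_
    rw [real_inner_comm]
    ring
  -- derivative of φ
  set φ' : ℝ → ℝ := fun t => -(2 * C₀) * Real.exp (-(2 * C₀) * t) * g t
      + Real.exp (-(2 * C₀) * t) * (2 * (inner ℝ (w' t - u' t) (w t - u t) : ℝ)) with hφ'_def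
  have hφd : ∀ t ∈ Set.Ioo 0 T \ S, HasDerivAt φ (φ' t) t := by
    intro t ht
    have he : HasDerivAt (fun s => Real.exp (-(2 * C₀) * s))
        (-(2 * C₀) * Real.exp (-(2 * C₀) * t)) t := by
      have := (((hasDerivAt_id t).const_mul (-(2 * C₀)))).exp
      simpa [mul_comm] using this
    exact he.mul (hgd t ht)
  -- bound on φ'
  have hφb : ∀ t ∈ Set.Ioo 0 T \ S, φ' t ≤ 2 * ε := by
    intro t ht
    have h1 := hw_evi t ht (u t)
    have h2 := hu_evi t ht (w t)
    have hnorm : ‖u t - w t‖ = ‖w t - u t‖ := norm_sub_rev _ _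
    have hsum : (inner ℝ (w' t - u' t) (w t - u t) : ℝ) ≤ C₀ * ‖w t - u t‖ ^ 2 + ε := by
      have hsplit : (inner ℝ (w' t - u' t) (w t - u t) : ℝ)
          = (inner ℝ (w' t) (w t - u t) : ℝ) + (inner ℝ (u' t) (u t - w t) : ℝ) := by
        rw [inner_sub_left]
        have : (inner ℝ (u' t) (u t - w t) : ℝ) = -(inner ℝ (u' t) (w t - u t) : ℝ) := by
          rw [← inner_neg_right]; congr 1; abel
        rw [this]; ring
      rw [hsplit]
      rw [hnorm] at h2
      linarith
    have hexp_pos : 0 < Real.exp (-(2 * C₀) * t) := Real.exp_pos _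
    have hexp_le : Real.exp (-(2 * C₀) * t) ≤ 1 := by
      apply Real.exp_le_one_iff.2
      have ht0 : 0 < t := ht.1.1
      nlinarith
    have hg_nonneg : 0 ≤ g t := by positivity
    have : φ' t = Real.exp (-(2 * C₀) * t)
        * (2 * (inner ℝ (w' t - u' t) (w t - u t) : ℝ) - 2 * C₀ * g t) := by
      rw [hφ'_def]; ring
    rw [this]
    calc Real.exp (-(2 * C₀) * t)
        * (2 * (inner ℝ (w' t - u' t) (w t - u t) : ℝ) - 2 * C₀ * g t)
        ≤ Real.exp (-(2 * C₀) * t) * (2 * ε) := by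
          apply mul_le_mul_of_nonneg_left _ hexp_pos.le
          simp only [hg_def]
          nlinarith
      _ ≤ 1 * (2 * ε) := by
          apply mul_le_mul_of_nonneg_right hexp_le (by linarith)
      _ = 2 * ε := one_mul _
  -- continuity of φ
  have hφc : ContinuousOn φ (Set.Icc 0 T) := by
    apply ContinuousOn.mul
    · exact (Real.continuous_exp.comp (continuous_const.mul continuous_id)).continuousOn
    · exact ((hw_cont.sub hu_cont).norm).pow 2
  -- apply gronwall
  have key := gronwall_linear_aux hS hφc hφd hφb
  intro t ht
  have h := key t ht
  have hφ0 : φ 0 = g 0 := by simp [hφ_def]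
  rw [hφ0] at h
  have hexp_pos : 0 < Real.exp (2 * C₀ * t) := Real.exp_pos _
  have hprod : Real.exp (2 * C₀ * t) * Real.exp (-(2 * C₀) * t) = 1 := by
    rw [← Real.exp_add]; ring_nf; exact Real.exp_zero
  have := mul_le_mul_of_nonneg_left h hexp_pos.le
  have hgt : Real.exp (2 * C₀ * t) * φ t = g t := by
    rw [hφ_def]
    calc Real.exp (2 * C₀ * t) * (Real.exp (-(2 * C₀) * t) * g t)
        = (Real.exp (2 * C₀ * t) * Real.exp (-(2 * C₀) * t)) * g t := by ring
      _ = g t := by rw [hprod]; ring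
  rw [hgt] at this
  calc ‖w t - u t‖ ^ 2 = g t := rfl
    _ ≤ Real.exp (2 * C₀ * t) * (g 0 + 2 * ε * t) := this
    _ = Real.exp (2 * C₀ * t) * ‖w 0 - u 0‖ ^ 2
        + 2 * t * Real.exp (2 * C₀ * t) * ε := by rw [hg_def]; ring
end

section
/- Let H be a real Hilbert space, F : H → ℝ convex and Lipschitz with constant L ≥ 0, τ > 0, K ≥ 0 with τ·K·L ≤ 1, u ∈ H, and T ⊆ H a closed convex set with 0 ∈ T. Let X ∈ T be a minimizer over T of the localized energy Φ(X) := τ·F(u + X) + (1/2)·‖X‖², i.e. Φ(X) ≤ Φ(Y) for all Y ∈ T. If v ∈ H satisfies ‖v − (u + X)‖ ≤ (K/2)·‖X‖², then F(v) ≤ F(u). -/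
/-- Energy dissipation for one step of the modified minimizing movement scheme:
if `X` minimizes the localized energy over a closed convex set containing `0`,
the step size restriction `τ·K·L ≤ 1` holds, and `v` is within the Taylor
estimate `(K/2)·‖X‖²` of `u + X`, then `F v ≤ F u`. -/
theorem energy_dissipation_step
    {H : Type*} [NormedAddCommGroup H] [InnerProductSpace ℝ H] [CompleteSpace H]
    (F : H → ℝ) (L : ℝ) (hL : 0 ≤ L)
    (hF_convex : ConvexOn ℝ Set.univ F)
    (hF_lip : ∀ a b : H, |F a - F b| ≤ L * ‖a - b‖)
    (τ K : ℝ) (hτ : 0 < τ) (hK : 0 ≤ K) (hstep : τ * K * L ≤ 1)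
    (u : H) (T : Set H) (hT_closed : IsClosed T) (hT_convex : Convex ℝ T)
    (hT0 : (0 : H) ∈ T)
    (X : H) (hX : X ∈ T)
    (hmin : ∀ Y ∈ T, τ * F (u + X) + (1 / 2) * ‖X‖ ^ 2
      ≤ τ * F (u + Y) + (1 / 2) * ‖Y‖ ^ 2)
    (v : H) (hv : ‖v - (u + X)‖ ≤ (K / 2) * ‖X‖ ^ 2) :
    F v ≤ F u := by
  have h0 := hmin 0 hT0
  simp only [add_zero, norm_zero] at h0
  -- h0 : τ * F (u + X) + (1/2) * ‖X‖^2 ≤ τ * F u + (1/2) * 0^2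
  have hlip := (abs_le.mp (hF_lip v (u + X))).2
  have h1 : F v ≤ F (u + X) + L * ((K / 2) * ‖X‖ ^ 2) := by
    have := mul_le_mul_of_nonneg_left hv hL
    linarith
  have h2 : F (u + X) ≤ F u - (1 / (2 * τ)) * ‖X‖ ^ 2 := by
    have hτ' : 0 < τ := hτ
    rw [le_sub_iff_add_le, ← mul_le_mul_iff_right₀ hτ']
    have : τ * (F u - (1 / (2 * τ)) * ‖X‖ ^ 2) = τ * F u - (1 / 2) * ‖X‖ ^ 2 := by
      field_simp
    nlinarith
  have h3 : L * ((K / 2) * ‖X‖ ^ 2) ≤ (1 / (2 * τ)) * ‖X‖ ^ 2 := by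
    have hn : 0 ≤ ‖X‖ ^ 2 := sq_nonneg _
    rw [one_div, ← div_eq_inv_mul, le_div_iff₀ (by positivity)]
    nlinarith [mul_le_mul_of_nonneg_right hstep hn]
  linarith
end

section
/- Let H be a real Hilbert space, F : H → ℝ convex and Lipschitz with constant L ≥ 0, τ > 0, u ∈ H, and T ⊆ H a closed linear subspace with orthogonal projection P : H → T. If X ∈ T minimizes the localized energy Φ(X) := τ·F(u + X) + (1/2)·‖X‖² over T, then there exists ζ ∈ H that is a subgradient of F at u + X (i.e. F(u + X) + ⟨ζ, v − (u + X)⟩ ≤ F(v) for all v ∈ H) such that X = −τ·P(ζ). -/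
/-- Subgradient characterization of the minimizer of the localized energy:
if `X` minimizes `Y ↦ τ·F(u + Y) + (1/2)·‖Y‖²` over a closed linear subspace `T`
with orthogonal projection `P`, then `X = -τ • P ζ` for some subgradient `ζ`
of `F` at `u + X`. -/
theorem localized_minimizer_subgradient
    {H : Type*} [NormedAddCommGroup H] [InnerProductSpace ℝ H] [CompleteSpace H]
    (F : H → ℝ) (L : ℝ) (hL : 0 ≤ L)
    (hF_convex : ConvexOn ℝ Set.univ F)
    (hF_lip : ∀ a b : H, |F a - F b| ≤ L * ‖a - b‖)
    (τ : ℝ) (hτ : 0 < τ) (u : H)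
    (T : Submodule ℝ H) (hT_closed : IsClosed (T : Set H))
    (P : H → H)
    (hP_mem : ∀ y : H, P y ∈ T)
    (hP_orth : ∀ y : H, ∀ z ∈ T, (inner ℝ (y - P y) z : ℝ) = 0)
    (X : H) (hX : X ∈ T)
    (hmin : ∀ Y ∈ T, τ * F (u + X) + (1 / 2) * ‖X‖ ^ 2
      ≤ τ * F (u + Y) + (1 / 2) * ‖Y‖ ^ 2) :
    ∃ ζ : H, (∀ v : H, F (u + X) + (inner ℝ ζ (v - (u + X)) : ℝ) ≤ F v) ∧
      X = -τ • P ζ := by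
  set p : H := u + X with hp
  -- difference quotient
  set q : H → ℝ → ℝ := fun d t => (F (p + t • d) - F p) / t with hq
  -- monotonicity of the difference quotient
  have hmono : ∀ d : H, ∀ s t : ℝ, 0 < s → s ≤ t → q d s ≤ q d t := by
    intro d s t hs hst
    have ht : (0:ℝ) < t := lt_of_lt_of_le hs hst
    have hb0 : (0:ℝ) ≤ s / t := by positivity
    have hb1 : s / t ≤ 1 := by rw [div_le_one ht]; exact hst
    have hcomb : (1 - s/t) • p + (s/t) • (p + t • d) = p + s • d := by
      match_scalars <;> field_simp <;> ring
    have key := hF_convex.2 (Set.mem_univ p) (Set.mem_univ (p + t • d))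
      (by linarith : (0:ℝ) ≤ 1 - s/t) hb0 (by ring)
    rw [hcomb] at key
    simp only [smul_eq_mul] at key
    have h2 : F (p + s • d) - F p ≤ (s/t) * (F (p + t • d) - F p) := by
      nlinarith [key]
    show (F (p + s • d) - F p) / s ≤ (F (p + t • d) - F p) / t
    rw [div_le_div_iff₀ hs ht]
    have h3 : (s/t) * (F (p + t • d) - F p) * t = (F (p + t • d) - F p) * s := by
      field_simp
    nlinarith [mul_le_mul_of_nonneg_right h2 ht.le]
  -- Lipschitz lower/upper bounds on quotients
  have hlip' : ∀ d : H, ∀ t : ℝ, 0 < t → |F (p + t • d) - F p| ≤ L * (t * ‖d‖) := by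
    intro d t ht
    have := hF_lip (p + t • d) p
    rwa [add_sub_cancel_left, norm_smul, Real.norm_eq_abs, abs_of_pos ht] at this
  have hlb : ∀ d : H, ∀ t : ℝ, 0 < t → -(L * ‖d‖) ≤ q d t := by
    intro d t ht
    have h := (abs_le.mp (hlip' d t ht)).1
    show -(L * ‖d‖) ≤ (F (p + t • d) - F p) / t
    rw [le_div_iff₀ ht]
    nlinarith
  set S : H → Set ℝ := fun d => (fun t => q d t) '' Set.Ioi (0:ℝ) with hS
  have hne : ∀ d : H, (S d).Nonempty := fun d => ⟨q d 1, ⟨1, Set.mem_Ioi.mpr one_pos, rfl⟩⟩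
  have hbdd : ∀ d : H, BddBelow (S d) := by
    intro d
    refine ⟨-(L * ‖d‖), ?_⟩
    rintro b ⟨t, ht, rfl⟩
    exact hlb d t ht
  set N : H → ℝ := fun d => sInf (S d) with hN
  have hNle : ∀ d : H, ∀ t : ℝ, 0 < t → N d ≤ q d t := by
    intro d t ht
    exact csInf_le (hbdd d) ⟨t, ht, rfl⟩
  have hq1 : ∀ d : H, q d 1 = F (p + d) - F p := by
    intro d; show (F (p + (1:ℝ) • d) - F p) / 1 = _; rw [one_smul, div_one]
  have hNupper : ∀ d : H, N d ≤ F (p + d) - F p := by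
    intro d
    have := hNle d 1 one_pos
    rwa [hq1 d] at this
  -- subadditivity
  have hNadd : ∀ d1 d2 : H, N (d1 + d2) ≤ N d1 + N d2 := by
    intro d1 d2
    refine le_of_forall_pos_le_add ?_
    intro ε hε
    obtain ⟨a1, ⟨t1, ht1, rfl⟩, ha1⟩ := Real.lt_sInf_add_pos (hne d1) (half_pos hε)
    obtain ⟨a2, ⟨t2, ht2, rfl⟩, ha2⟩ := Real.lt_sInf_add_pos (hne d2) (half_pos hε)
    set t : ℝ := min t1 t2 / 2 with htdef
    have ht1' : 0 < t1 := ht1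
    have ht2' : 0 < t2 := ht2
    have ht : 0 < t := by
      rw [htdef]
      have := lt_min ht1' ht2'
      positivity
    have h2t1 : 2 * t ≤ t1 := by
      have := min_le_left t1 t2; rw [htdef]; linarith
    have h2t2 : 2 * t ≤ t2 := by
      have := min_le_right t1 t2; rw [htdef]; linarith
    -- midpoint convexity
    have hcomb : (1/2 : ℝ) • (p + (2*t) • d1) + (1/2 : ℝ) • (p + (2*t) • d2)
        = p + t • (d1 + d2) := by
      match_scalars <;> ring
    have key := hF_convex.2 (Set.mem_univ (p + (2*t) • d1)) (Set.mem_univ (p + (2*t) • d2))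
      (by norm_num : (0:ℝ) ≤ 1/2) (by norm_num : (0:ℝ) ≤ 1/2) (by norm_num)
    rw [hcomb] at key
    simp only [smul_eq_mul] at key
    have hsub : q (d1 + d2) t ≤ q d1 (2*t) + q d2 (2*t) := by
      show (F (p + t • (d1 + d2)) - F p) / t
          ≤ (F (p + (2*t) • d1) - F p) / (2*t) + (F (p + (2*t) • d2) - F p) / (2*t)
      rw [← add_div, div_le_div_iff₀ ht (by linarith : (0:ℝ) < 2*t)]
      nlinarith [key]
    have hm1 : q d1 (2*t) ≤ q d1 t1 := hmono d1 (2*t) t1 (by linarith) h2t1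
    have hm2 : q d2 (2*t) ≤ q d2 t2 := hmono d2 (2*t) t2 (by linarith) h2t2
    have := hNle (d1 + d2) t ht
    have hNS1 : sInf (S d1) = N d1 := rfl
    have hNS2 : sInf (S d2) = N d2 := rfl
    rw [hNS1] at ha1; rw [hNS2] at ha2
    linarith
  -- positive homogeneity
  have hNhom_le : ∀ c : ℝ, 0 < c → ∀ d : H, N (c • d) ≤ c * N d := by
    intro c hc d
    refine le_of_forall_pos_le_add ?_
    intro ε hε
    obtain ⟨a, ⟨t, ht, rfl⟩, ha⟩ := Real.lt_sInf_add_pos (hne d) (div_pos hε hc)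
    have hkey : q (c • d) (t/c) = c * q d t := by
      show (F (p + (t/c) • c • d) - F p) / (t/c) = c * ((F (p + t • d) - F p) / t)
      rw [smul_smul, div_mul_cancel₀ t hc.ne', div_div_eq_mul_div]
      ring
    have h1 := hNle (c • d) (t/c) (div_pos ht hc)
    rw [hkey] at h1
    have hNS : sInf (S d) = N d := rfl
    rw [hNS] at ha
    have h2 : c * q d t < c * (N d + ε / c) := by
      exact (mul_lt_mul_iff_right₀ hc).mpr ha
    have h3 : c * (N d + ε / c) = c * N d + ε := by field_simp
    linarith
  have hNhom : ∀ c : ℝ, 0 < c → ∀ d : H, N (c • d) = c * N d := by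
    intro c hc d
    refine le_antisymm (hNhom_le c hc d) ?_
    have h := hNhom_le c⁻¹ (inv_pos.mpr hc) (c • d)
    rw [smul_smul, inv_mul_cancel₀ hc.ne', one_smul] at h
    have := mul_le_mul_of_nonneg_left h hc.le
    rw [← mul_assoc, mul_inv_cancel₀ hc.ne', one_mul] at this
    linarith
  -- lower bound on T from minimality
  set w : H := (-τ⁻¹) • X with hw
  have hwT : w ∈ T := T.smul_mem _ hX
  have hTlow : ∀ d ∈ T, (inner ℝ w d : ℝ) ≤ N d := by
    intro d hd
    have hinner : (inner ℝ w d : ℝ) = -τ⁻¹ * (inner ℝ X d : ℝ) := real_inner_smul_left X d (-τ⁻¹)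
    have hqlow : ∀ s : ℝ, 0 < s →
        -(inner ℝ X d : ℝ) / τ - s * ‖d‖^2 / (2*τ) ≤ q d s := by
      intro s hs
      have hmem : X + s • d ∈ T := T.add_mem hX (T.smul_mem s hd)
      have h := hmin (X + s • d) hmem
      have hup : u + (X + s • d) = p + s • d := by rw [hp]; abel
      rw [hup] at h
      have hnorm : ‖X + s • d‖^2 = ‖X‖^2 + 2 * (s * (inner ℝ X d : ℝ)) + s^2 * ‖d‖^2 := by
        rw [@norm_add_sq_real, real_inner_smul_right, norm_smul, Real.norm_eq_abs,
          abs_of_pos hs, mul_pow]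
      rw [hnorm] at h
      have hkey : -(s * (inner ℝ X d : ℝ)) - s^2 * ‖d‖^2 / 2 ≤ τ * (F (p + s • d) - F p) := by
        linarith
      show -(inner ℝ X d : ℝ) / τ - s * ‖d‖^2 / (2*τ) ≤ (F (p + s • d) - F p) / s
      rw [div_sub_div _ _ hτ.ne' (by positivity : (2*τ) ≠ 0), div_le_div_iff₀ (by positivity) hs]
      nlinarith [hkey]
    -- every quotient is ≥ inner w d
    have hqge : ∀ t : ℝ, 0 < t → (inner ℝ w d : ℝ) ≤ q d t := by
      intro t ht
      refine le_of_forall_pos_le_add ?_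
      intro ε hε
      set s : ℝ := min t (2 * τ * ε / (‖d‖^2 + 1)) with hsdef
      have hs : 0 < s := by
        apply lt_min ht
        positivity
      have hst : s ≤ t := min_le_left _ _
      have hsε : s * ‖d‖^2 / (2*τ) ≤ ε := by
        have hsle : s ≤ 2 * τ * ε / (‖d‖^2 + 1) := min_le_right _ _
        rw [div_le_iff₀ (by positivity : (0:ℝ) < 2*τ)]
        calc s * ‖d‖^2 ≤ (2 * τ * ε / (‖d‖^2 + 1)) * ‖d‖^2 := by
              apply mul_le_mul_of_nonneg_right hsle (by positivity)
          _ ≤ ε * (2*τ) := by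
              rw [div_mul_eq_mul_div, div_le_iff₀ (by positivity : (0:ℝ) < ‖d‖^2 + 1)]
              nlinarith [sq_nonneg ‖d‖, hτ.le, hε.le]
      have h1 := hqlow s hs
      have h2 := hmono d s t hs hst
      rw [hinner]
      have : -(inner ℝ X d : ℝ) / τ = -τ⁻¹ * (inner ℝ X d : ℝ) := by field_simp
      linarith [this ▸ h1]
    refine le_csInf (hne d) ?_
    rintro b ⟨t, ht, rfl⟩
    exact hqge t ht
  -- Hahn–Banach extension
  set f : H →ₗ.[ℝ] ℝ := (innerₛₗ ℝ w).toPMap T with hf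
  have hfle : ∀ x : f.domain, f x ≤ N x := by
    rintro ⟨x, hx⟩
    have : f ⟨x, hx⟩ = (inner ℝ w x : ℝ) := rfl
    rw [this]
    exact hTlow x hx
  obtain ⟨g, hg1, hg2⟩ := exists_extension_of_le_sublinear f N hNhom hNadd hfle
  -- boundedness of g
  have hgb : ∀ x : H, ‖g x‖ ≤ L * ‖x‖ := by
    intro x
    rw [Real.norm_eq_abs, abs_le]
    constructor
    · have h1 := hg2 (-x)
      have h2 := hNupper (-x)
      have h3 := (abs_le.mp (hF_lip (p + (-x)) p)).2
      rw [add_sub_cancel_left, norm_neg] at h3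
      have : g (-x) = -g x := map_neg g x
      rw [this] at h1
      linarith
    · have h1 := hg2 x
      have h2 := hNupper x
      have h3 := (abs_le.mp (hF_lip (p + x) p)).2
      rw [add_sub_cancel_left] at h3
      linarith
  set G : H →L[ℝ] ℝ := LinearMap.mkContinuous g L hgb with hG
  set ζ : H := (InnerProductSpace.toDual ℝ H).symm G with hζ
  have hζinner : ∀ x : H, (inner ℝ ζ x : ℝ) = g x := by
    intro x
    rw [hζ]
    exact InnerProductSpace.toDual_symm_apply
  refine ⟨ζ, ?_, ?_⟩
  · intro v
    have h1 := hg2 (v - p)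
    have h2 := hNupper (v - p)
    rw [add_sub_cancel] at h2
    have h4 := hζinner (v - p)
    show F p + (inner ℝ ζ (v - p) : ℝ) ≤ F v
    rw [h4]
    linarith
  · -- X = -τ • P ζ
    have hζT : ∀ z ∈ T, (inner ℝ ζ z : ℝ) = (inner ℝ w z : ℝ) := by
      intro z hz
      rw [hζinner z]
      have := hg1 ⟨z, hz⟩
      have hfz : f ⟨z, hz⟩ = (inner ℝ w z : ℝ) := rfl
      rw [hfz] at this
      exact this
    have hPz : ∀ z ∈ T, (inner ℝ (P ζ) z : ℝ) = (inner ℝ w z : ℝ) := by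
      intro z hz
      have horth := hP_orth ζ z hz
      rw [inner_sub_left] at horth
      have := hζT z hz
      linarith
    have hdiff : P ζ - w = 0 := by
      have hzmem : P ζ - w ∈ T := T.sub_mem (hP_mem ζ) hwT
      have h := hPz (P ζ - w) hzmem
      have : (inner ℝ (P ζ - w) (P ζ - w) : ℝ) = 0 := by
        rw [inner_sub_left]; linarith
      exact inner_self_eq_zero.mp this
    have hPw : P ζ = w := sub_eq_zero.mp hdiff
    rw [hPw, hw, smul_smul]
    have : -τ * -τ⁻¹ = 1 := by field_simp
    rw [this, one_smul]
end

section
/- Let H be a real Hilbert space, F : H → ℝ a function, C₀ ≥ 0 and ε ≥ 0. Let u, w be curves with values in H both differentiable at a time t, and suppose ⟨u'(t), u(t) − w(t)⟩ ≤ F(w(t)) − F(u(t)) + (C₀/2)·‖u(t) − w(t)‖² and ⟨w'(t), w(t) − u(t)⟩ ≤ F(u(t)) − F(w(t)) + (C₀/2)·‖w(t) − u(t)‖² + ε. Then the function s ↦ ‖u(s) − w(s)‖² is differentiable at t and its derivative at t is at most 2C₀·‖u(t) − w(t)‖² + 2ε. -/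
/-- Doubling step in the proof of the error estimate: combining the two
evolutionary variational inequalities, each evaluated at the other curve,
gives a differential inequality for the squared distance. -/
theorem evi_doubling_step
    {H : Type*} [NormedAddCommGroup H] [InnerProductSpace ℝ H] [CompleteSpace H]
    (F : H → ℝ) (C₀ ε : ℝ) (hC₀ : 0 ≤ C₀) (hε : 0 ≤ ε)
    (u w : ℝ → H) (u' w' : H) (t : ℝ)
    (hu : HasDerivAt u u' t) (hw : HasDerivAt w w' t)
    (hu_evi : (inner ℝ u' (u t - w t) : ℝ)
      ≤ F (w t) - F (u t) + (C₀ / 2) * ‖u t - w t‖ ^ 2)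
    (hw_evi : (inner ℝ w' (w t - u t) : ℝ)
      ≤ F (u t) - F (w t) + (C₀ / 2) * ‖w t - u t‖ ^ 2 + ε) :
    DifferentiableAt ℝ (fun s => ‖u s - w s‖ ^ 2) t ∧
      deriv (fun s => ‖u s - w s‖ ^ 2) t ≤ 2 * C₀ * ‖u t - w t‖ ^ 2 + 2 * ε := by
  have hd : HasDerivAt (fun s => u s - w s) (u' - w') t := hu.sub hw
  have hsq : HasDerivAt (fun s => ‖u s - w s‖ ^ 2)
      (2 * inner ℝ (u' - w') (u t - w t)) t := by
    have := hd.inner ℝ hd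
    rw [show (fun s => ‖u s - w s‖ ^ 2) = fun s => inner ℝ (u s - w s) (u s - w s) by
      ext s; exact (real_inner_self_eq_norm_sq _).symm]
    refine this.congr_deriv ?_
    · rw [real_inner_comm]; ring
  refine ⟨hsq.differentiableAt, ?_⟩
  rw [hsq.deriv]
  have key : (inner ℝ (u' - w') (u t - w t) : ℝ)
      = inner ℝ u' (u t - w t) + inner ℝ w' (w t - u t) := by
    rw [inner_sub_left]
    have : (w t - u t) = -(u t - w t) := by abel
    rw [this, inner_neg_right]; ring
  have hnorm : ‖w t - u t‖ = ‖u t - w t‖ := norm_sub_rev _ _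
  rw [key]
  have := add_le_add hu_evi hw_evi
  rw [hnorm] at this
  nlinarith [this]
end

section
/- Let H be a real Hilbert space, F : H → ℝ a function, C₀ ≥ 0, T > 0, and S ⊂ (0,T) a finite set. Let u, w : [0,T] → H be continuous curves differentiable at every t ∈ (0,T) \ S such that for every such t and every v ∈ H, ⟨u'(t), u(t) − v⟩ ≤ F(v) − F(u(t)) + (C₀/2)·‖u(t) − v‖² and ⟨w'(t), w(t) − v⟩ ≤ F(v) − F(w(t)) + (C₀/2)·‖w(t) − v‖². If u(0) = w(0), then u(t) = w(t) for all t ∈ [0,T]. -/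
/-- A continuous function on `[a, b]` whose derivative is nonpositive away from a finite
exceptional set is antitone on `[a, b]`. -/
lemma antitoneOn_of_deriv_nonpos_finite_ex (S : Set ℝ) (hS : S.Finite) :
    ∀ (f f' : ℝ → ℝ) (a b : ℝ), ContinuousOn f (Set.Icc a b) →
      (∀ t ∈ Set.Ioo a b \ S, HasDerivAt f (f' t) t) →
      (∀ t ∈ Set.Ioo a b \ S, f' t ≤ 0) →
      AntitoneOn f (Set.Icc a b) := by
  refine Set.Finite.induction_on S hS ?_ ?_
  · intro f f' a b hc hd h'
    have hder : ∀ t ∈ Set.Ioo a b, HasDerivAt f (f' t) t := fun t ht =>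
      hd t ⟨ht, Set.notMem_empty t⟩
    apply antitoneOn_of_deriv_nonpos (convex_Icc a b) hc
    · intro t ht
      rw [interior_Icc] at ht
      exact (hder t ht).differentiableAt.differentiableWithinAt
    · intro t ht
      rw [interior_Icc] at ht
      rw [(hder t ht).deriv]
      exact h' t ⟨ht, Set.notMem_empty t⟩
  · rintro x s hx - ih
    intro f f' a b hc hd h'
    by_cases hxab : x ∈ Set.Ioo a b
    · have h1 : AntitoneOn f (Set.Icc a x) := by
        refine ih f f' a x (hc.mono (Set.Icc_subset_Icc le_rfl hxab.2.le)) ?_ ?_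
        · intro t ht
          exact hd t ⟨⟨ht.1.1, ht.1.2.trans hxab.2⟩,
            fun h => h.elim (fun h => absurd h ht.1.2.ne) ht.2⟩
        · intro t ht
          exact h' t ⟨⟨ht.1.1, ht.1.2.trans hxab.2⟩,
            fun h => h.elim (fun h => absurd h ht.1.2.ne) ht.2⟩
      have h2 : AntitoneOn f (Set.Icc x b) := by
        refine ih f f' x b (hc.mono (Set.Icc_subset_Icc hxab.1.le le_rfl)) ?_ ?_
        · intro t ht
          exact hd t ⟨⟨hxab.1.trans ht.1.1, ht.1.2⟩,
            fun h => h.elim (fun h => absurd h ht.1.1.ne') ht.2⟩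
        · intro t ht
          exact h' t ⟨⟨hxab.1.trans ht.1.1, ht.1.2⟩,
            fun h => h.elim (fun h => absurd h ht.1.1.ne') ht.2⟩
      intro p hp q hq hpq
      rcases le_total q x with hqx | hxq
      · exact h1 ⟨hp.1, hpq.trans hqx⟩ ⟨hq.1, hqx⟩ hpq
      · rcases le_total x p with hxp | hpx
        · exact h2 ⟨hxp, hp.2⟩ ⟨hxq, hq.2⟩ hpq
        · exact (h2 ⟨le_rfl, hxab.2.le⟩ ⟨hxq, hq.2⟩ hxq).trans
            (h1 ⟨hp.1, hpx⟩ ⟨hxab.1.le, le_rfl⟩ hpx)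
    · refine ih f f' a b hc ?_ ?_
      · intro t ht
        exact hd t ⟨ht.1, fun h => h.elim (fun h => hxab (h ▸ ht.1)) ht.2⟩
      · intro t ht
        exact h' t ⟨ht.1, fun h => h.elim (fun h => hxab (h ▸ ht.1)) ht.2⟩

/-- Uniqueness of curves satisfying the evolutionary variational inequality
with defect 0 and semi-convexity constant `C₀`. -/
theorem evi_uniqueness
    {H : Type*} [NormedAddCommGroup H] [InnerProductSpace ℝ H] [CompleteSpace H]
    (F : H → ℝ) (C₀ T : ℝ) (hC₀ : 0 ≤ C₀) (hT : 0 < T)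
    (S : Set ℝ) (hS : S.Finite) (hST : S ⊆ Set.Ioo 0 T)
    (u w : ℝ → H) (u' w' : ℝ → H)
    (hu_cont : ContinuousOn u (Set.Icc 0 T))
    (hw_cont : ContinuousOn w (Set.Icc 0 T))
    (hu_deriv : ∀ t ∈ Set.Ioo 0 T \ S, HasDerivAt u (u' t) t)
    (hw_deriv : ∀ t ∈ Set.Ioo 0 T \ S, HasDerivAt w (w' t) t)
    (hu_evi : ∀ t ∈ Set.Ioo 0 T \ S, ∀ v : H,
      (inner ℝ (u' t) (u t - v) : ℝ) ≤ F v - F (u t) + (C₀ / 2) * ‖u t - v‖ ^ 2)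
    (hw_evi : ∀ t ∈ Set.Ioo 0 T \ S, ∀ v : H,
      (inner ℝ (w' t) (w t - v) : ℝ) ≤ F v - F (w t) + (C₀ / 2) * ‖w t - v‖ ^ 2)
    (h0 : u 0 = w 0) :
    ∀ t ∈ Set.Icc 0 T, u t = w t := by
  set g : ℝ → ℝ := fun t => inner ℝ (u t - w t) (u t - w t) with hg_def
  set f : ℝ → ℝ := fun t => Real.exp (-(2 * C₀) * t) * g t with hf_def
  set f' : ℝ → ℝ := fun t =>
    Real.exp (-(2 * C₀) * t) * (2 * inner ℝ (u' t - w' t) (u t - w t)) +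
      (-(2 * C₀) * Real.exp (-(2 * C₀) * t)) * g t with hf'_def
  have hg_cont : ContinuousOn g (Set.Icc 0 T) :=
    (hu_cont.sub hw_cont).inner (hu_cont.sub hw_cont)
  have hf_cont : ContinuousOn f (Set.Icc 0 T) :=
    (Real.continuous_exp.comp (continuous_const.mul continuous_id)).continuousOn.mul hg_cont
  have hf_deriv : ∀ t ∈ Set.Ioo 0 T \ S, HasDerivAt f (f' t) t := by
    intro t ht
    have hd : HasDerivAt (fun t => u t - w t) (u' t - w' t) t :=
      (hu_deriv t ht).sub (hw_deriv t ht)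
    have hg' : HasDerivAt g (2 * inner ℝ (u' t - w' t) (u t - w t)) t := by
      have := hd.inner ℝ hd
      refine this.congr_deriv ?_
      rw [real_inner_comm]; ring
    have hexp : HasDerivAt (fun t => Real.exp (-(2 * C₀) * t))
        (Real.exp (-(2 * C₀) * t) * (-(2 * C₀) * 1)) t :=
      ((hasDerivAt_id t).const_mul (-(2 * C₀))).exp
    have h := hexp.mul hg'
    refine h.congr_deriv ?_
    simp only [hf'_def]
    ring
  have hf'_nonpos : ∀ t ∈ Set.Ioo 0 T \ S, f' t ≤ 0 := by
    intro t ht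
    have h1 := hu_evi t ht (w t)
    have h2 := hw_evi t ht (u t)
    have hsum : (inner ℝ (u' t - w' t) (u t - w t) : ℝ) ≤ C₀ * ‖u t - w t‖ ^ 2 := by
      have e2 : (inner ℝ (w' t) (w t - u t) : ℝ) = -inner ℝ (w' t) (u t - w t) := by
        rw [← inner_neg_right]; congr 1; abel
      have e3 : ‖w t - u t‖ = ‖u t - w t‖ := by rw [← norm_neg]; congr 1; abel
      rw [e2, e3] at h2
      have := add_le_add h1 h2
      rw [inner_sub_left]
      linarith
    have hgt : g t = ‖u t - w t‖ ^ 2 := real_inner_self_eq_norm_sq _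
    have hexp_pos : 0 < Real.exp (-(2 * C₀) * t) := Real.exp_pos _
    have : f' t = Real.exp (-(2 * C₀) * t) *
        (2 * inner ℝ (u' t - w' t) (u t - w t) - 2 * C₀ * ‖u t - w t‖ ^ 2) := by
      simp only [hf'_def]
      rw [hgt]; ring
    rw [this]
    apply mul_nonpos_of_nonneg_of_nonpos hexp_pos.le
    nlinarith
  have hanti : AntitoneOn f (Set.Icc 0 T) :=
    antitoneOn_of_deriv_nonpos_finite_ex S hS f f' 0 T hf_cont hf_deriv hf'_nonpos
  intro t ht
  have hf0 : f 0 = 0 := by simp [hf_def, hg_def, h0]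
  have hft : f t ≤ 0 := hf0 ▸ hanti (Set.left_mem_Icc.2 hT.le) ht ht.1
  have hgt : g t ≤ 0 := by
    have hexp_pos : 0 < Real.exp (-(2 * C₀) * t) := Real.exp_pos _
    by_contra h
    push_neg at h
    exact absurd hft (not_le.2 (mul_pos hexp_pos h))
  have hnorm : ‖u t - w t‖ ^ 2 = 0 := by
    rw [← real_inner_self_eq_norm_sq]
    exact le_antisymm hgt real_inner_self_nonneg
  have : u t - w t = 0 := by
    have := (pow_eq_zero_iff two_ne_zero).1 hnorm
    simpa using this
  exact sub_eq_zero.1 this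
end

section
/- Let H be a real inner product space and F : H → ℝ a function that is subadditive (F(a + b) ≤ F(a) + F(b) for all a, b ∈ H) and even (F(−a) = F(a) for all a ∈ H). Let w ∈ H and let ζ ∈ H be a subgradient of F at w, i.e. F(w) + ⟨ζ, v − w⟩ ≤ F(v) for all v ∈ H. Then for all v, z ∈ H, ⟨ζ, v − z⟩ ≤ F(v) − F(z) + 2·F(z − w). -/
/-- Key estimate of the term I₁: for a subadditive even function `F` and a
subgradient `ζ` of `F` at `w`, one has
`⟨ζ, v − z⟩ ≤ F v − F z + 2·F (z − w)` for all `v, z`. -/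
theorem subgradient_shifted_estimate
    {H : Type*} [NormedAddCommGroup H] [InnerProductSpace ℝ H]
    (F : H → ℝ)
    (hF_subadd : ∀ a b : H, F (a + b) ≤ F a + F b)
    (hF_even : ∀ a : H, F (-a) = F a)
    (w ζ : H)
    (hζ : ∀ v : H, F w + (inner ℝ ζ (v - w) : ℝ) ≤ F v) :
    ∀ v z : H, (inner ℝ ζ (v - z) : ℝ) ≤ F v - F z + 2 * F (z - w) := by
  intro v z
  have h1 : F w + (inner ℝ ζ (v - w) : ℝ) ≤ F v := hζ v
  have h2 : F w + (inner ℝ ζ ((2 • w - z) - w) : ℝ) ≤ F (2 • w - z) := hζ (2 • w - z)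
  have h3 : F (2 • w - z) ≤ F w + F (w - z) := by
    have := hF_subadd w (w - z)
    have e : w + (w - z) = 2 • w - z := by module
    rwa [e] at this
  have h4 : F z ≤ F w + F (z - w) := by
    have := hF_subadd w (z - w)
    have e : w + (z - w) = z := by module
    rwa [e] at this
  have h5 : F (w - z) = F (z - w) := by
    rw [← hF_even (w - z)]; congr 1; module
  have e2 : (2 • w - z) - w = w - z := by module
  rw [e2] at h2
  have hsplit : (inner ℝ ζ (v - z) : ℝ) = inner ℝ ζ (v - w) + inner ℝ ζ (w - z) := by
    rw [← inner_add_right]; congr 1; module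
  rw [hsplit]
  nlinarith [h1, h2, h3, h4, h5]
end
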